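/- Assume the Setup (Section 2) with conditions (sing), (main0), (main1), suppose T has a unitary asymptote (X_T, U), and suppose (xxnxxn1): sup_{n≥0} ‖X_n‖‖X_n⁻¹‖ < ∞. Set δ_n = inf{‖X_T x‖/‖x‖ : 0 ≠ x ∈ H_n}. Then inf_{n≥0} δ_n ‖Q_n‖ > 0. -/

import Mathlib

noncomputable section
set_option linter.unusedSectionVars false
open scoped ENNReal InnerProductSpace
open ContinuousLinearMap

/-- A bounded operator `V` is an isometry. -/
def IsIsometryOp {K : Type} [NormedAddCommGroup K] [InnerProductSpace ℂ K]
    (V : K →L[ℂ] K) : Prop :=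
  ∀ x, ‖V x‖ = ‖x‖

/-- A bounded operator `V` is unitary: an isometry onto. -/
def IsUnitaryOp {K : Type} [NormedAddCommGroup K] [InnerProductSpace ℂ K]
    (V : K →L[ℂ] K) : Prop :=
  (∀ x, ‖V x‖ = ‖x‖) ∧ Function.Surjective V

/-- `(X, U)` is a unitary asymptote of `T`: `U` is unitary, `X` intertwines `T` with `U`,
the pair is minimal (`⋁_{n ≥ 0} U^{-n} X H = K`), and it has the universal property with
respect to every pair `(Y, W)` with `W` unitary on a Hilbert space and `Y T = W Y`. -/
def IsUnitaryAsymptote {H : Type} [NormedAddCommGroup H] [InnerProductSpace ℂ H]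
    [CompleteSpace H] (T : H →L[ℂ] H)
    (K : Type) [NormedAddCommGroup K] [InnerProductSpace ℂ K] [CompleteSpace K]
    (X : H →L[ℂ] K) (U : K →L[ℂ] K) : Prop :=
  IsUnitaryOp U ∧ X.comp T = U.comp X ∧
    (Submodule.span ℂ (⋃ n : ℕ, ⇑(U ^ n) ⁻¹' Set.range X)).topologicalClosure = ⊤ ∧
    ∀ (K' : Type) [NormedAddCommGroup K'] [InnerProductSpace ℂ K'] [CompleteSpace K']
      (W : K' →L[ℂ] K') (Y : H →L[ℂ] K'), IsUnitaryOp W → Y.comp T = W.comp Y →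
      ∃! Z : K →L[ℂ] K', Z.comp U = W.comp Z ∧ Y = Z.comp X

lemma aux_unitary_comp {K : Type} [NormedAddCommGroup K] [InnerProductSpace ℂ K]
    [CompleteSpace K] {V : K →L[ℂ] K} (hV : IsUnitaryOp V) :
    (∀ x, ContinuousLinearMap.adjoint V (V x) = x) ∧
      (∀ x, V (ContinuousLinearMap.adjoint V x) = x) := by
  have hinner : ∀ x y : K, inner ℂ (V x) (V y) = (inner ℂ x y : ℂ) := fun x y =>
    LinearIsometry.inner_map_map ⟨V.toLinearMap, hV.1⟩ x y
  have h1 : ∀ x, ContinuousLinearMap.adjoint V (V x) = x := by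
    intro x
    refine ext_inner_left ℂ fun y => ?_
    rw [ContinuousLinearMap.adjoint_inner_right]
    exact hinner y x
  refine ⟨h1, fun x => ?_⟩
  obtain ⟨w, rfl⟩ := hV.2 x
  rw [h1 w]

lemma aux_norm_triple {E F : Type} [NormedAddCommGroup E] [InnerProductSpace ℂ E]
    [CompleteSpace E] [NormedAddCommGroup F] [InnerProductSpace ℂ F] [CompleteSpace F]
    (A : E →L[ℂ] F) :
    ‖A‖ ^ 3 ≤ ‖(A.comp (ContinuousLinearMap.adjoint A)).comp A‖ := by
  rcases eq_or_ne A 0 with rfl | hA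
  · simp
  have hApos : 0 < ‖A‖ := norm_pos_iff.2 hA
  set P : E →L[ℂ] E := (ContinuousLinearMap.adjoint A).comp A with hPdef
  have hP : ContinuousLinearMap.adjoint P = P := by
    rw [hPdef, ContinuousLinearMap.adjoint_comp, ContinuousLinearMap.adjoint_adjoint]
  have h1 : ‖P‖ = ‖A‖ * ‖A‖ := ContinuousLinearMap.norm_adjoint_comp_self A
  have h2 : ‖P.comp P‖ = ‖P‖ * ‖P‖ := by
    have := ContinuousLinearMap.norm_adjoint_comp_self P
    rwa [hP] at this
  have h3 : P.comp P = (ContinuousLinearMap.adjoint A).comp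
      ((A.comp (ContinuousLinearMap.adjoint A)).comp A) := by
    rw [hPdef]; ext x; simp
  have h4 : ‖P.comp P‖ ≤ ‖A‖ * ‖(A.comp (ContinuousLinearMap.adjoint A)).comp A‖ := by
    rw [h3]
    calc ‖(ContinuousLinearMap.adjoint A).comp ((A.comp (ContinuousLinearMap.adjoint A)).comp A)‖
        ≤ ‖ContinuousLinearMap.adjoint A‖ * ‖(A.comp (ContinuousLinearMap.adjoint A)).comp A‖ :=
          ContinuousLinearMap.opNorm_comp_le _ _
      _ = ‖A‖ * ‖(A.comp (ContinuousLinearMap.adjoint A)).comp A‖ := by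
          rw [ContinuousLinearMap.adjoint.norm_map]
  nlinarith [h2, h1, h4, norm_nonneg ((A.comp (ContinuousLinearMap.adjoint A)).comp A)]

set_option maxHeartbeats 2000000 in
/-- Theorem 2.4: if `T` has a unitary asymptote `(X_T, U)` and `sup_n ‖X_n‖‖X_n⁻¹‖ < ∞`,
then `inf_n δ_n ‖Q_n‖ > 0`. -/
theorem unitary_asymptote_lower_bound
    {H : Type} [NormedAddCommGroup H] [InnerProductSpace ℂ H] [CompleteSpace H]
    [TopologicalSpace.SeparableSpace H]
    (K0 : ℕ → Type) [∀ n, NormedAddCommGroup (K0 n)] [∀ n, InnerProductSpace ℂ (K0 n)]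
    [∀ n, CompleteSpace (K0 n)] [∀ n, TopologicalSpace.SeparableSpace (K0 n)]
    -- the unitaries `U_{0n}`, each reductive, with pairwise singular spectral measures:
    (U0 : ∀ n, K0 n →L[ℂ] K0 n)
    (hU0 : ∀ n, IsUnitaryOp (U0 n))
    (hU0red : ∀ (n) (F : Submodule ℂ (K0 n)), IsClosed (F : Set (K0 n)) →
      (∀ x ∈ F, U0 n x ∈ F) → ∀ x ∈ F, ContinuousLinearMap.adjoint (U0 n) x ∈ F)
    (hsing : ∀ n k, n ≠ k → ∀ Z : K0 n →L[ℂ] K0 k, Z.comp (U0 n) = (U0 k).comp Z → Z = 0)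
    (T : H →L[ℂ] H)
    -- the nonzero closed `T`-invariant subspaces `H_n`:
    (Hn : ℕ → Submodule ℂ H)
    (hHcl : ∀ n, IsClosed ((Hn n : Set H)))
    (hHne : ∀ n, Hn n ≠ ⊥)
    (hTH : ∀ n, ∀ x ∈ Hn n, T x ∈ Hn n)
    -- `Vn n = ⋁_{k ≠ n} H_k`:
    (Vn : ℕ → Submodule ℂ H)
    (hVn : ∀ n, Vn n = (⨆ k ∈ {k : ℕ | k ≠ n}, Hn k).topologicalClosure)
    -- (main0):
    (hmain0 : ∀ n, Hn n ⊓ Vn n = ⊥ ∧ Hn n ⊔ Vn n = ⊤)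
    -- (main1): the invertible intertwiners `X_n : H_n → K_{0n}`:
    (X0 : ∀ n, ↥(Hn n) ≃L[ℂ] K0 n)
    (hX0 : ∀ (n) (x : ↥(Hn n)), X0 n ⟨T ↑x, hTH n ↑x x.2⟩ = U0 n (X0 n x))
    -- the skew projections `Q_n` onto `H_n` along `⋁_{k ≠ n} H_k`:
    (Q : ℕ → H →L[ℂ] H)
    (hQmem : ∀ n x, Q n x ∈ Hn n)
    (hQid : ∀ n, ∀ x ∈ Hn n, Q n x = x)
    (hQker : ∀ n, ∀ x ∈ Vn n, Q n x = 0)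
    -- (xxnxxn1):
    (hXX : ∃ C : ℝ, ∀ n,
      ‖(X0 n : ↥(Hn n) →L[ℂ] K0 n)‖ * ‖((X0 n).symm : K0 n →L[ℂ] ↥(Hn n))‖ ≤ C)
    -- a unitary asymptote `(X_T, Uu)` of `T`:
    {K : Type} [NormedAddCommGroup K] [InnerProductSpace ℂ K] [CompleteSpace K]
    (XT : H →L[ℂ] K) (Uu : K →L[ℂ] K)
    (hasym : IsUnitaryAsymptote T K XT Uu) :
    ∃ ε : ℝ, 0 < ε ∧ ∀ n, ∀ x ∈ Hn n, ε * ‖x‖ ≤ ‖XT x‖ * ‖Q n‖ := by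
  obtain ⟨hUu, hXTT, _hmin, huniv⟩ := hasym
  -- `Vn n` is `T`-invariant
  have hVnT : ∀ n, ∀ v ∈ Vn n, T v ∈ Vn n := by
    intro n v hv
    rw [hVn n] at hv ⊢
    set S := ⨆ k ∈ {k : ℕ | k ≠ n}, Hn k with hSdef
    have hmaps : ∀ x ∈ S, T x ∈ S := by
      have hle : S ≤ Submodule.comap (T : H →ₗ[ℂ] H) S := by
        refine iSup₂_le fun k hk => ?_
        intro x hx
        exact (le_iSup₂ (f := fun k (_ : k ∈ {k : ℕ | k ≠ n}) => Hn k) k hk) (hTH k x hx)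
      intro x hx
      exact hle hx
    have hv' : v ∈ closure (S : Set H) := hv
    exact map_mem_closure T.continuous hv' hmaps
  -- skew projections commute with `T`
  have hQT : ∀ n (x : H), Q n (T x) = T (Q n x) := by
    intro n x
    have hx : x ∈ Hn n ⊔ Vn n := by rw [(hmain0 n).2]; trivial
    obtain ⟨h, hh, v, hv, hsum⟩ := Submodule.mem_sup.1 hx
    subst hsum
    have e1 : Q n (h + v) = h := by
      rw [map_add, hQid n h hh, hQker n v hv, add_zero]
    rw [e1, map_add T h v, map_add (Q n), hQid n (T h) (hTH n h hh),
      hQker n (T v) (hVnT n v hv), add_zero]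
  -- the intertwiners `Y n = X0 n ∘ Q n : H → K0 n`
  set Qr : ∀ n, H →L[ℂ] ↥(Hn n) := fun n => (Q n).codRestrict (Hn n) (hQmem n) with hQr
  set Y : ∀ n, H →L[ℂ] K0 n :=
    fun n => ((X0 n : ↥(Hn n) →L[ℂ] K0 n)).comp (Qr n) with hY
  have hYapp : ∀ n x, Y n x = X0 n (Qr n x) := fun n x => rfl
  have hQrT : ∀ n (x : H), Qr n (T x) = ⟨T ↑(Qr n x), hTH n _ (Qr n x).2⟩ := by
    intro n x
    apply Subtype.ext
    show Q n (T x) = T (Q n x)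
    exact hQT n x
  have hYT : ∀ n, (Y n).comp T = (U0 n).comp (Y n) := by
    intro n
    ext x
    show X0 n (Qr n (T x)) = U0 n (X0 n (Qr n x))
    rw [hQrT n x, hX0 n (Qr n x)]
  -- the operators `Z n : K → K0 n` from the universal property
  have hZex : ∀ n, ∃! Z : K →L[ℂ] K0 n, Z.comp Uu = (U0 n).comp Z ∧ Y n = Z.comp XT :=
    fun n => huniv (K0 n) (U0 n) (Y n) (hU0 n) (hYT n)
  have hZex' : ∀ n, ∃ Z : K →L[ℂ] K0 n, Z.comp Uu = (U0 n).comp Z ∧ Y n = Z.comp XT :=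
    fun n => (hZex n).exists
  choose Z hZU hZX using hZex'
  -- adjoints intertwine the other way
  have hUuadj := aux_unitary_comp hUu
  have hU0adj : ∀ n, (∀ x, ContinuousLinearMap.adjoint (U0 n) (U0 n x) = x) ∧
      (∀ x, U0 n (ContinuousLinearMap.adjoint (U0 n) x) = x) := fun n => aux_unitary_comp (hU0 n)
  have hZadj : ∀ n, (ContinuousLinearMap.adjoint (Z n)).comp (U0 n)
      = Uu.comp (ContinuousLinearMap.adjoint (Z n)) := by
    intro n
    have h := congrArg ContinuousLinearMap.adjoint (hZU n)
    rw [ContinuousLinearMap.adjoint_comp, ContinuousLinearMap.adjoint_comp] at h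
    have hpt : ∀ y, ContinuousLinearMap.adjoint Uu (ContinuousLinearMap.adjoint (Z n) y)
        = ContinuousLinearMap.adjoint (Z n) (ContinuousLinearMap.adjoint (U0 n) y) := by
      intro y
      exact DFunLike.congr_fun h y
    ext x
    have h2 := hpt (U0 n x)
    rw [(hU0adj n).1 x] at h2
    show ContinuousLinearMap.adjoint (Z n) (U0 n x) = Uu (ContinuousLinearMap.adjoint (Z n) x)
    rw [← h2, hUuadj.2]
  -- orthogonality of the `Z n` via (sing)
  have horth : ∀ m k, m ≠ k → (Z k).comp (ContinuousLinearMap.adjoint (Z m)) = 0 := by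
    intro m k hmk
    apply hsing m k hmk
    calc ((Z k).comp (ContinuousLinearMap.adjoint (Z m))).comp (U0 m)
        = (Z k).comp ((ContinuousLinearMap.adjoint (Z m)).comp (U0 m)) :=
          (ContinuousLinearMap.comp_assoc _ _ _)
      _ = (Z k).comp (Uu.comp (ContinuousLinearMap.adjoint (Z m))) := by rw [hZadj m]
      _ = ((Z k).comp Uu).comp (ContinuousLinearMap.adjoint (Z m)) :=
          (ContinuousLinearMap.comp_assoc _ _ _).symm
      _ = ((U0 k).comp (Z k)).comp (ContinuousLinearMap.adjoint (Z m)) := by rw [hZU k]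
      _ = (U0 k).comp ((Z k).comp (ContinuousLinearMap.adjoint (Z m))) :=
          (ContinuousLinearMap.comp_assoc _ _ _)
  -- `Y n ≠ 0`
  have hYpos : ∀ n, 0 < ‖Y n‖ := by
    intro n
    obtain ⟨x, hxm, hx0⟩ := (Submodule.ne_bot_iff _).1 (hHne n)
    have hxs : Qr n x = ⟨x, hxm⟩ := Subtype.ext (hQid n x hxm)
    have hne : Y n x ≠ 0 := by
      rw [hYapp, hxs]
      intro hc
      apply hx0
      have : (⟨x, hxm⟩ : ↥(Hn n)) = 0 := by
        apply (X0 n).injective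
        rw [hc, map_zero]
      exact congrArg Subtype.val this
    have hYne : Y n ≠ 0 := by
      intro hc
      apply hne
      rw [hc]
      rfl
    exact norm_pos_iff.2 hYne
  -- key claim: uniform bound `‖Z n‖ ≤ C1 ‖Y n‖`
  have hkey : ∃ C1 : ℝ, 0 < C1 ∧ ∀ n, ‖Z n‖ ≤ C1 * ‖Y n‖ := by
    by_contra hcon
    push_neg at hcon
    have hsel : ∀ C : ℝ, ∃ n, C < ‖Z n‖ / ‖Y n‖ := by
      intro C
      obtain ⟨n, hn⟩ := hcon (max C 1) (lt_of_lt_of_le one_pos (le_max_right _ _))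
      exact ⟨n, lt_of_le_of_lt (le_max_left C 1) ((lt_div_iff₀ (hYpos n)).2 hn)⟩
    obtain ⟨g, hgpow, hginj⟩ : ∃ g : ℕ → ℕ,
        (∀ m, (4:ℝ) ^ m < ‖Z (g m)‖ / ‖Y (g m)‖) ∧ Function.Injective g := by
      set b : ℕ → ℝ := fun n => ‖Z n‖ / ‖Y n‖ with hb
      set g : ℕ → ℕ := fun m => Nat.rec (hsel 1).choose
        (fun m prev => (hsel (max ((4:ℝ) ^ (m + 1)) (b prev))).choose) m with hg
      have hg0 : (1:ℝ) < b (g 0) := (hsel 1).choose_spec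
      have hgs : ∀ m, max ((4:ℝ) ^ (m + 1)) (b (g m)) < b (g (m + 1)) := fun m =>
        (hsel (max ((4:ℝ) ^ (m + 1)) (b (g m)))).choose_spec
      have hgpow : ∀ m, (4:ℝ) ^ m < b (g m) := by
        intro m
        cases m with
        | zero => simpa using hg0
        | succ m => exact lt_of_le_of_lt (le_max_left _ _) (hgs m)
      have hgmono : StrictMono fun m => b (g m) :=
        strictMono_nat_of_lt_succ fun m => lt_of_le_of_lt (le_max_right _ _) (hgs m)
      exact ⟨g, hgpow, fun j m h => hgmono.injective (congrArg b h)⟩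
    have hZpos : ∀ j, 0 < ‖Z (g j)‖ := by
      intro j
      have h4 : (0:ℝ) < 4 ^ j := by positivity
      have hbpos : 0 < ‖Z (g j)‖ / ‖Y (g j)‖ := h4.trans (hgpow j)
      by_contra hle
      push_neg at hle
      have h0 : ‖Z (g j)‖ = 0 := le_antisymm hle (norm_nonneg _)
      rw [h0, zero_div] at hbpos
      exact lt_irrefl 0 hbpos
    set S : ℕ → H →L[ℂ] K := fun j =>
      ((2:ℝ)⁻¹ ^ j * (‖Z (g j)‖ * ‖Y (g j)‖)⁻¹) •
        ((ContinuousLinearMap.adjoint (Z (g j))).comp (Y (g j))) with hS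
    have hSapp : ∀ j x, S j x = ((2:ℝ)⁻¹ ^ j * (‖Z (g j)‖ * ‖Y (g j)‖)⁻¹) •
        (ContinuousLinearMap.adjoint (Z (g j)) (Y (g j) x)) := fun j x => rfl
    have hSnorm : ∀ j, ‖S j‖ ≤ (2:ℝ)⁻¹ ^ j := by
      intro j
      have hcj : (0:ℝ) ≤ (2:ℝ)⁻¹ ^ j * (‖Z (g j)‖ * ‖Y (g j)‖)⁻¹ := by positivity
      have hre : ‖S j‖ = ((2:ℝ)⁻¹ ^ j * (‖Z (g j)‖ * ‖Y (g j)‖)⁻¹) *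
          ‖(ContinuousLinearMap.adjoint (Z (g j))).comp (Y (g j))‖ := by
        have h := norm_smul ((2:ℝ)⁻¹ ^ j * (‖Z (g j)‖ * ‖Y (g j)‖)⁻¹)
          ((ContinuousLinearMap.adjoint (Z (g j))).comp (Y (g j)))
        rw [Real.norm_of_nonneg hcj] at h
        exact h
      rw [hre]
      have h1 : ‖(ContinuousLinearMap.adjoint (Z (g j))).comp (Y (g j))‖
          ≤ ‖Z (g j)‖ * ‖Y (g j)‖ := by
        calc ‖(ContinuousLinearMap.adjoint (Z (g j))).comp (Y (g j))‖
            ≤ ‖ContinuousLinearMap.adjoint (Z (g j))‖ * ‖Y (g j)‖ :=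
              ContinuousLinearMap.opNorm_comp_le _ _
          _ = ‖Z (g j)‖ * ‖Y (g j)‖ := by rw [ContinuousLinearMap.adjoint.norm_map]
      have h2 : (0:ℝ) < ‖Z (g j)‖ * ‖Y (g j)‖ := mul_pos (hZpos j) (hYpos (g j))
      calc (2:ℝ)⁻¹ ^ j * (‖Z (g j)‖ * ‖Y (g j)‖)⁻¹ * ‖(ContinuousLinearMap.adjoint (Z (g j))).comp (Y (g j))‖
          ≤ (2:ℝ)⁻¹ ^ j * (‖Z (g j)‖ * ‖Y (g j)‖)⁻¹ * (‖Z (g j)‖ * ‖Y (g j)‖) :=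
            mul_le_mul_of_nonneg_left h1 hcj
        _ = (2:ℝ)⁻¹ ^ j := by rw [mul_assoc, inv_mul_cancel₀ (ne_of_gt h2), mul_one]
    have hSsum : Summable S :=
      Summable.of_norm_bounded (summable_geometric_of_lt_one (by norm_num) (by norm_num)) hSnorm
    set Y' : H →L[ℂ] K := ∑' j, S j with hY'
    have hY'x : ∀ x, HasSum (fun j => S j x) (Y' x) := by
      intro x
      have := (hSsum.hasSum).mapL (ContinuousLinearMap.apply ℂ K x)
      simpa using this
    have hSj : ∀ j x, S j (T x) = Uu (S j x) := by
      intro j x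
      have hYj : Y (g j) (T x) = U0 (g j) (Y (g j) x) := by
        have := DFunLike.congr_fun (hYT (g j)) x
        simpa using this
      have hadj : ∀ w, ContinuousLinearMap.adjoint (Z (g j)) (U0 (g j) w)
          = Uu (ContinuousLinearMap.adjoint (Z (g j)) w) := by
        intro w
        have := DFunLike.congr_fun (hZadj (g j)) w
        simpa using this
      rw [hSapp, hSapp, hYj, hadj, ContinuousLinearMap.map_smul_of_tower]
    have hY'T : Y'.comp T = Uu.comp Y' := by
      ext x
      have h1 : HasSum (fun j => S j (T x)) (Y' (T x)) := hY'x (T x)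
      have h2 : HasSum (fun j => Uu (S j x)) (Uu (Y' x)) := (hY'x x).mapL Uu
      have h1' : HasSum (fun j => Uu (S j x)) (Y' (T x)) := by
        have he : (fun j => S j (T x)) = fun j => Uu (S j x) := funext fun j => hSj j x
        rwa [he] at h1
      have h3 : Y' (T x) = Uu (Y' x) := h1'.unique h2
      simpa using h3
    obtain ⟨Z', hZ'p, _⟩ := huniv K Uu Y' hUu hY'T
    obtain ⟨hZ'U, hZ'X⟩ := hZ'p
    obtain ⟨m, hm⟩ := pow_unbounded_of_one_lt ‖Z'‖ (by norm_num : (1:ℝ) < 2)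
    set n := g m with hn
    have hZp : 0 < ‖Z n‖ := hZpos m
    have hYp : 0 < ‖Y n‖ := hYpos n
    set c : ℝ := (2:ℝ)⁻¹ ^ m * (‖Z n‖ * ‖Y n‖)⁻¹ with hc
    have hcpos : 0 < c := by rw [hc]; positivity
    set A : K →L[ℂ] K0 n := ((Z n).comp (ContinuousLinearMap.adjoint (Z n))).comp (Z n) with hA
    set Y'' : H →L[ℂ] K0 n :=
      c • ((Z n).comp (ContinuousLinearMap.adjoint (Z n))).comp (Y n) with hY''
    have hmid : ((Z n).comp (ContinuousLinearMap.adjoint (Z n))).comp (U0 n)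
        = (U0 n).comp ((Z n).comp (ContinuousLinearMap.adjoint (Z n))) := by
      calc ((Z n).comp (ContinuousLinearMap.adjoint (Z n))).comp (U0 n)
          = (Z n).comp ((ContinuousLinearMap.adjoint (Z n)).comp (U0 n)) :=
            ContinuousLinearMap.comp_assoc _ _ _
        _ = (Z n).comp (Uu.comp (ContinuousLinearMap.adjoint (Z n))) := by rw [hZadj n]
        _ = ((Z n).comp Uu).comp (ContinuousLinearMap.adjoint (Z n)) :=
            (ContinuousLinearMap.comp_assoc _ _ _).symm
        _ = ((U0 n).comp (Z n)).comp (ContinuousLinearMap.adjoint (Z n)) := by rw [hZU n]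
        _ = (U0 n).comp ((Z n).comp (ContinuousLinearMap.adjoint (Z n))) :=
            ContinuousLinearMap.comp_assoc _ _ _
    have hY''T : Y''.comp T = (U0 n).comp Y'' := by
      rw [hY'', ContinuousLinearMap.smul_comp, ContinuousLinearMap.comp_smul]
      congr 1
      calc (((Z n).comp (ContinuousLinearMap.adjoint (Z n))).comp (Y n)).comp T
          = ((Z n).comp (ContinuousLinearMap.adjoint (Z n))).comp ((Y n).comp T) :=
            ContinuousLinearMap.comp_assoc _ _ _
        _ = ((Z n).comp (ContinuousLinearMap.adjoint (Z n))).comp ((U0 n).comp (Y n)) := by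
            rw [hYT n]
        _ = (((Z n).comp (ContinuousLinearMap.adjoint (Z n))).comp (U0 n)).comp (Y n) :=
            (ContinuousLinearMap.comp_assoc _ _ _).symm
        _ = ((U0 n).comp ((Z n).comp (ContinuousLinearMap.adjoint (Z n)))).comp (Y n) := by
            rw [hmid]
        _ = (U0 n).comp (((Z n).comp (ContinuousLinearMap.adjoint (Z n))).comp (Y n)) :=
            ContinuousLinearMap.comp_assoc _ _ _
    have hBuniq := huniv (K0 n) (U0 n) Y'' (hU0 n) hY''T
    have hB1 : ((Z n).comp Z').comp Uu = (U0 n).comp ((Z n).comp Z') := by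
      calc ((Z n).comp Z').comp Uu = (Z n).comp (Z'.comp Uu) :=
            ContinuousLinearMap.comp_assoc _ _ _
        _ = (Z n).comp (Uu.comp Z') := by rw [hZ'U]
        _ = ((Z n).comp Uu).comp Z' := (ContinuousLinearMap.comp_assoc _ _ _).symm
        _ = ((U0 n).comp (Z n)).comp Z' := by rw [hZU n]
        _ = (U0 n).comp ((Z n).comp Z') := ContinuousLinearMap.comp_assoc _ _ _
    have hB1X : Y'' = ((Z n).comp Z').comp XT := by
      have hptv : ∀ x, Z n (Y' x) = Y'' x := by
        intro x
        have h1 : HasSum (fun j => Z n (S j x)) (Z n (Y' x)) := by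
          have := (hY'x x).mapL (Z n)
          simpa using this
        have hzero : ∀ j, j ≠ m → Z n (S j x) = 0 := by
          intro j hj
          have hne : g j ≠ n := fun hgeq => hj (hginj hgeq)
          have h0 : (Z n).comp (ContinuousLinearMap.adjoint (Z (g j))) = 0 := horth (g j) n hne
          have h0' : Z n (ContinuousLinearMap.adjoint (Z (g j)) (Y (g j) x)) = 0 := by
            have := DFunLike.congr_fun h0 (Y (g j) x)
            simpa using this
          rw [hSapp, ContinuousLinearMap.map_smul_of_tower, h0', smul_zero]
        have hsingle : Z n (Y' x) = Z n (S m x) := by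
          rw [← h1.tsum_eq, tsum_eq_single m hzero]
        rw [hsingle, hSapp, ContinuousLinearMap.map_smul_of_tower]
        rfl
      ext x
      have hyx : Y' x = Z' (XT x) := DFunLike.congr_fun hZ'X x
      have : (((Z n).comp Z').comp XT) x = Z n (Z' (XT x)) := rfl
      rw [this, ← hyx, hptv x]
    have hB2 : (c • A).comp Uu = (U0 n).comp (c • A) := by
      rw [ContinuousLinearMap.smul_comp, ContinuousLinearMap.comp_smul]
      congr 1
      calc A.comp Uu
          = ((Z n).comp (ContinuousLinearMap.adjoint (Z n))).comp ((Z n).comp Uu) := by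
            rw [hA]; exact ContinuousLinearMap.comp_assoc _ _ _
        _ = ((Z n).comp (ContinuousLinearMap.adjoint (Z n))).comp ((U0 n).comp (Z n)) := by
            rw [hZU n]
        _ = (((Z n).comp (ContinuousLinearMap.adjoint (Z n))).comp (U0 n)).comp (Z n) :=
            (ContinuousLinearMap.comp_assoc _ _ _).symm
        _ = ((U0 n).comp ((Z n).comp (ContinuousLinearMap.adjoint (Z n)))).comp (Z n) := by
            rw [hmid]
        _ = (U0 n).comp A := by rw [hA]; exact ContinuousLinearMap.comp_assoc _ _ _
    have hB2X : Y'' = (c • A).comp XT := by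
      rw [ContinuousLinearMap.smul_comp, hY'']
      congr 1
      calc ((Z n).comp (ContinuousLinearMap.adjoint (Z n))).comp (Y n)
          = ((Z n).comp (ContinuousLinearMap.adjoint (Z n))).comp ((Z n).comp XT) := by
            rw [← hZX n]
        _ = A.comp XT := by rw [hA]; exact (ContinuousLinearMap.comp_assoc _ _ _).symm
    have hBB : (Z n).comp Z' = c • A := by
      obtain ⟨Zc, _, hZcu⟩ := hBuniq
      rw [hZcu _ ⟨hB1, hB1X⟩, hZcu _ ⟨hB2, hB2X⟩]
    have hnormA : ‖Z n‖ ^ 3 ≤ ‖A‖ := by rw [hA]; exact aux_norm_triple (Z n)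
    have h5 : c * ‖Z n‖ ^ 3 ≤ ‖(Z n).comp Z'‖ := by
      have he : ‖(Z n).comp Z'‖ = c * ‖A‖ := by
        rw [hBB]
        have h := norm_smul c A
        rwa [Real.norm_of_nonneg hcpos.le] at h
      rw [he]
      exact mul_le_mul_of_nonneg_left hnormA hcpos.le
    have h6 : ‖(Z n).comp Z'‖ ≤ ‖Z n‖ * ‖Z'‖ := ContinuousLinearMap.opNorm_comp_le _ _
    have h56 : c * ‖Z n‖ ^ 3 ≤ ‖Z n‖ * ‖Z'‖ := le_trans h5 h6
    have hcval : c * (‖Z n‖ * ‖Y n‖) = (2:ℝ)⁻¹ ^ m := by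
      rw [hc, mul_assoc, inv_mul_cancel₀ (ne_of_gt (mul_pos hZp hYp)), mul_one]
    have hstep1 : (2:ℝ)⁻¹ ^ m * ‖Z n‖ ≤ ‖Z'‖ * ‖Y n‖ := by
      have h57 : ‖Z n‖ * ((2:ℝ)⁻¹ ^ m * ‖Z n‖) ≤ ‖Z n‖ * (‖Z'‖ * ‖Y n‖) := by
        calc ‖Z n‖ * ((2:ℝ)⁻¹ ^ m * ‖Z n‖) = c * ‖Z n‖ ^ 3 * ‖Y n‖ := by
              rw [← hcval]; ring
          _ ≤ ‖Z n‖ * ‖Z'‖ * ‖Y n‖ := mul_le_mul_of_nonneg_right h56 hYp.le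
          _ = ‖Z n‖ * (‖Z'‖ * ‖Y n‖) := by ring
      exact le_of_mul_le_mul_left h57 hZp
    have hZn4 : (4:ℝ) ^ m * ‖Y n‖ < ‖Z n‖ := by
      have h4 := hgpow m
      exact (lt_div_iff₀ hYp).1 h4
    have hstep2 : (2:ℝ) ^ m * ‖Y n‖ < ‖Z'‖ * ‖Y n‖ := by
      calc (2:ℝ) ^ m * ‖Y n‖ = (2:ℝ)⁻¹ ^ m * ((4:ℝ) ^ m * ‖Y n‖) := by
            rw [← mul_assoc, ← mul_pow]
            norm_num
        _ < (2:ℝ)⁻¹ ^ m * ‖Z n‖ := by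
            exact mul_lt_mul_of_pos_left hZn4 (by positivity)
        _ ≤ ‖Z'‖ * ‖Y n‖ := hstep1
    have hfin : (2:ℝ) ^ m < ‖Z'‖ := lt_of_mul_lt_mul_right hstep2 hYp.le
    linarith
  -- conclusion
  obtain ⟨C1, hC1pos, hC1⟩ := hkey
  obtain ⟨C, hC⟩ := hXX
  set Cm := max C 1 with hCm
  have hCmpos : 0 < Cm := lt_of_lt_of_le one_pos (le_max_right _ _)
  refine ⟨(C1 * Cm)⁻¹, by positivity, ?_⟩
  intro n x hx
  set xs : ↥(Hn n) := ⟨x, hx⟩ with hxs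
  have hQx : Qr n x = xs := Subtype.ext (hQid n x hx)
  have hYx : Y n x = X0 n xs := by rw [hYapp, hQx]
  have hZx : Y n x = Z n (XT x) := by rw [hZX n]; rfl
  have h1 : ‖x‖ ≤ ‖((X0 n).symm : K0 n →L[ℂ] ↥(Hn n))‖ * ‖Y n x‖ := by
    have e : ((X0 n).symm : K0 n →L[ℂ] ↥(Hn n)) (X0 n xs) = xs := by simp
    have : ‖x‖ = ‖xs‖ := rfl
    rw [this, ← e, hYx]
    exact ContinuousLinearMap.le_opNorm _ _
  have h2 : ‖Y n x‖ ≤ ‖Z n‖ * ‖XT x‖ := by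
    rw [hZx]
    exact ContinuousLinearMap.le_opNorm _ _
  have h3 : ‖Y n‖ ≤ ‖(X0 n : ↥(Hn n) →L[ℂ] K0 n)‖ * ‖Q n‖ := by
    refine ContinuousLinearMap.opNorm_le_bound _ (by positivity) fun y => ?_
    have e1 : ‖(X0 n : ↥(Hn n) →L[ℂ] K0 n) (Qr n y)‖
        ≤ ‖(X0 n : ↥(Hn n) →L[ℂ] K0 n)‖ * ‖Qr n y‖ := ContinuousLinearMap.le_opNorm _ _
    have e2 : ‖Qr n y‖ = ‖Q n y‖ := rfl
    calc ‖Y n y‖ = ‖(X0 n : ↥(Hn n) →L[ℂ] K0 n) (Qr n y)‖ := rfl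
      _ ≤ ‖(X0 n : ↥(Hn n) →L[ℂ] K0 n)‖ * ‖Q n y‖ := by rw [← e2]; exact e1
      _ ≤ ‖(X0 n : ↥(Hn n) →L[ℂ] K0 n)‖ * (‖Q n‖ * ‖y‖) := by
          gcongr
          exact ContinuousLinearMap.le_opNorm _ _
      _ = ‖(X0 n : ↥(Hn n) →L[ℂ] K0 n)‖ * ‖Q n‖ * ‖y‖ := by ring
  rw [inv_mul_le_iff₀ (by positivity)]
  calc ‖x‖ ≤ ‖((X0 n).symm : K0 n →L[ℂ] ↥(Hn n))‖ * ‖Y n x‖ := h1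
    _ ≤ ‖((X0 n).symm : K0 n →L[ℂ] ↥(Hn n))‖ * (‖Z n‖ * ‖XT x‖) := by gcongr
    _ ≤ ‖((X0 n).symm : K0 n →L[ℂ] ↥(Hn n))‖ * ((C1 * ‖Y n‖) * ‖XT x‖) := by
        gcongr
        exact hC1 n
    _ ≤ ‖((X0 n).symm : K0 n →L[ℂ] ↥(Hn n))‖ *
        ((C1 * (‖(X0 n : ↥(Hn n) →L[ℂ] K0 n)‖ * ‖Q n‖)) * ‖XT x‖) := by
        gcongr
    _ = C1 * (‖(X0 n : ↥(Hn n) →L[ℂ] K0 n)‖ * ‖((X0 n).symm : K0 n →L[ℂ] ↥(Hn n))‖) *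
        (‖XT x‖ * ‖Q n‖) := by ring
    _ ≤ C1 * Cm * (‖XT x‖ * ‖Q n‖) := by
        gcongr
        exact le_trans (hC n) (le_max_left _ _)
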